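/- In BS(1,p) with p ≥ 2, if a word w of type PN (a P-block followed by an N-block) has t-exponent sum zero, then w represents an element of the subgroup ⟨a⟩, i.e. w =_G aᵐ for some integer m. -/

import Mathlib

/-- The single defining relation of `BS(1,p)`: `t a t⁻¹ a^{-p}`. -/
def BSrel (p : ℕ) : Set (FreeGroup Bool) :=
  {FreeGroup.of true * FreeGroup.of false * (FreeGroup.of true)⁻¹ * (FreeGroup.of false ^ p)⁻¹}

/-- The solvable Baumslag–Solitar group `BS(1,p) = ⟨a, t | t a t⁻¹ = aᵖ⟩`. -/
abbrev BS (p : ℕ) : Type := PresentedGroup (BSrel p)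

/-- The generator `a` of `BS(1,p)`. -/
def gena (p : ℕ) : BS p := PresentedGroup.of false

/-- The generator `t` of `BS(1,p)`. -/
def gent (p : ℕ) : BS p := PresentedGroup.of true

/-- A letter over the alphabet `{a, a⁻¹, t, t⁻¹}`: first component `false` = `a`,
`true` = `t`; second component is the sign (`true` = positive). -/
abbrev Letter : Type := Bool × Bool

/-- Value of a letter in `BS(1,p)`. -/
def letterVal (p : ℕ) : Letter → BS p
  | (g, s) => (if g then gent p else gena p) ^ (if s then (1 : ℤ) else -1)

/-- The element of `BS(1,p)` represented by a word. -/
def wordVal (p : ℕ) (w : List Letter) : BS p := (w.map (letterVal p)).prod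

def tP : Letter := (true, true)
def tN : Letter := (true, false)
def aP : Letter := (false, true)
def aN : Letter := (false, false)

/-- `t`-exponent sum of a word. -/
def texp (w : List Letter) : ℤ := (w.count tP : ℤ) - (w.count tN : ℤ)

/-- A word of type `P`: contains at least one `t` and no `t⁻¹`. -/
def TypeP (w : List Letter) : Prop := tP ∈ w ∧ tN ∉ w

/-- A word of type `N`: contains at least one `t⁻¹` and no `t`. -/
def TypeN (w : List Letter) : Prop := tN ∈ w ∧ tP ∉ w

/-- The word `a^x` (as a string of `|x|` letters). -/
def aWord (x : ℤ) : List Letter := List.replicate x.natAbs (false, decide (0 < x))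

/-- The word `a^{ε₀} t a^{ε₁} t ⋯ t a^{ε_q}`. -/
def stackWord (ε : ℕ → ℤ) (q : ℕ) : List Letter :=
  ((List.range q).map (fun i => aWord (ε i) ++ [tP])).flatten ++ aWord (ε q)

/-- The word `t⁻ᵏ a^{ε₀} t ⋯ t a^{ε_q} t⁻ᵐ`. -/
def canonWord (k : ℕ) (ε : ℕ → ℤ) (q m : ℕ) : List Letter :=
  List.replicate k tN ++ stackWord ε q ++ List.replicate m tN

/-- `ℤ[1/p]` as an additive subgroup of `ℚ`. -/
def Zp (p : ℕ) : AddSubgroup ℚ := AddSubgroup.closure {x : ℚ | ∃ n : ℕ, x = ((p : ℚ))⁻¹ ^ n}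

section Aux

variable (p : ℕ)

lemma bs_rel : gent p * gena p * (gent p)⁻¹ = gena p ^ p := by
  have h : ((QuotientGroup.mk (FreeGroup.of true * FreeGroup.of false *
      (FreeGroup.of true)⁻¹ * (FreeGroup.of false ^ p)⁻¹) : BS p)) = 1 :=
    (QuotientGroup.eq_one_iff _).mpr (Subgroup.subset_normalClosure rfl)
  have h2 : gent p * gena p * (gent p)⁻¹ * (gena p ^ p)⁻¹ = 1 := by
    exact h
  exact mul_inv_eq_one.mp h2

lemma conj_zpow_rel (x : ℤ) :
    gent p * gena p ^ x * (gent p)⁻¹ = gena p ^ ((p : ℤ) * x) := by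
  rw [← conj_zpow, bs_rel, ← zpow_natCast, ← zpow_mul]

lemma conj_pow_rel (k : ℕ) (x : ℤ) :
    gent p ^ k * gena p ^ x * (gent p ^ k)⁻¹ = gena p ^ ((p : ℤ) ^ k * x) := by
  induction k with
  | zero => simp
  | succ n ih =>
    calc gent p ^ (n + 1) * gena p ^ x * (gent p ^ (n + 1))⁻¹
        = gent p * (gent p ^ n * gena p ^ x * (gent p ^ n)⁻¹) * (gent p)⁻¹ := by
          rw [pow_succ']; group
      _ = gent p * gena p ^ ((p : ℤ) ^ n * x) * (gent p)⁻¹ := by rw [ih]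
      _ = gena p ^ ((p : ℤ) * ((p : ℤ) ^ n * x)) := conj_zpow_rel p _
      _ = gena p ^ ((p : ℤ) ^ (n + 1) * x) := by ring_nf

lemma swap_rel (k : ℕ) (x : ℤ) :
    gena p ^ x * (gent p ^ k)⁻¹ = (gent p ^ k)⁻¹ * gena p ^ ((p : ℤ) ^ k * x) := by
  calc gena p ^ x * (gent p ^ k)⁻¹
      = (gent p ^ k)⁻¹ * (gent p ^ k * gena p ^ x * (gent p ^ k)⁻¹) := by group
    _ = (gent p ^ k)⁻¹ * gena p ^ ((p : ℤ) ^ k * x) := by rw [conj_pow_rel]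

lemma wordVal_cons (l : Letter) (w : List Letter) :
    wordVal p (l :: w) = letterVal p l * wordVal p w := by simp [wordVal]

lemma letterVal_aP : letterVal p (false, true) = gena p := by simp [letterVal]
lemma letterVal_aN : letterVal p (false, false) = (gena p)⁻¹ := by simp [letterVal]
lemma letterVal_tP : letterVal p (true, true) = gent p := by simp [letterVal]
lemma letterVal_tN : letterVal p (true, false) = (gent p)⁻¹ := by simp [letterVal]

lemma typeP_val : ∀ w : List Letter, tN ∉ w →
    ∃ x : ℤ, wordVal p w = gena p ^ x * gent p ^ (List.count tP w) := by
  intro w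
  induction w with
  | nil => intro _; exact ⟨0, by simp [wordVal]⟩
  | cons l w ih =>
    intro hw
    have hl : l ≠ tN := fun h => hw (by simp [h])
    have hw' : tN ∉ w := fun h => hw (List.mem_cons_of_mem _ h)
    obtain ⟨x, hx⟩ := ih hw'
    obtain ⟨g, s⟩ := l
    rw [wordVal_cons, hx]
    cases g
    · cases s
      · refine ⟨x - 1, ?_⟩
        have hc : List.count tP ((false, false) :: w) = List.count tP w := by
          simp [tP, List.count_cons]
        rw [hc, letterVal_aN]; group
      · refine ⟨x + 1, ?_⟩
        have hc : List.count tP ((false, true) :: w) = List.count tP w := by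
          simp [tP, List.count_cons]
        rw [hc, letterVal_aP]; group
    · cases s
      · exact absurd rfl hl
      · refine ⟨(p : ℤ) * x, ?_⟩
        have hc : List.count tP ((true, true) :: w) = List.count tP w + 1 := by
          simp [tP, List.count_cons]
        rw [hc, letterVal_tP]
        calc gent p * (gena p ^ x * gent p ^ (List.count tP w))
            = (gent p * gena p ^ x * (gent p)⁻¹) * gent p ^ (List.count tP w + 1) := by
              rw [pow_succ']; group
          _ = gena p ^ ((p : ℤ) * x) * gent p ^ (List.count tP w + 1) := by
              rw [conj_zpow_rel]

lemma typeN_val : ∀ w : List Letter, tP ∉ w →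
    ∃ y : ℤ, wordVal p w = (gent p ^ (List.count tN w))⁻¹ * gena p ^ y := by
  intro w
  induction w with
  | nil => intro _; exact ⟨0, by simp [wordVal]⟩
  | cons l w ih =>
    intro hw
    have hl : l ≠ tP := fun h => hw (by simp [h])
    have hw' : tP ∉ w := fun h => hw (List.mem_cons_of_mem _ h)
    obtain ⟨y, hy⟩ := ih hw'
    obtain ⟨g, s⟩ := l
    rw [wordVal_cons, hy]
    set k := List.count tN w with hk
    cases g
    · cases s
      · refine ⟨(p : ℤ) ^ k * (-1) + y, ?_⟩
        have hc : List.count tN ((false, false) :: w) = k := by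
          simp [tN, List.count_cons, hk]
        rw [hc, letterVal_aN]
        calc (gena p)⁻¹ * ((gent p ^ k)⁻¹ * gena p ^ y)
            = (gena p ^ (-1 : ℤ) * (gent p ^ k)⁻¹) * gena p ^ y := by group
          _ = ((gent p ^ k)⁻¹ * gena p ^ ((p : ℤ) ^ k * (-1))) * gena p ^ y := by
              rw [swap_rel]
          _ = (gent p ^ k)⁻¹ * gena p ^ ((p : ℤ) ^ k * (-1) + y) := by
              rw [mul_assoc, ← zpow_add]
      · refine ⟨(p : ℤ) ^ k * 1 + y, ?_⟩
        have hc : List.count tN ((false, true) :: w) = k := by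
          simp [tN, List.count_cons, hk]
        rw [hc, letterVal_aP]
        calc gena p * ((gent p ^ k)⁻¹ * gena p ^ y)
            = (gena p ^ (1 : ℤ) * (gent p ^ k)⁻¹) * gena p ^ y := by group
          _ = ((gent p ^ k)⁻¹ * gena p ^ ((p : ℤ) ^ k * 1)) * gena p ^ y := by
              rw [swap_rel]
          _ = (gent p ^ k)⁻¹ * gena p ^ ((p : ℤ) ^ k * 1 + y) := by
              rw [mul_assoc, ← zpow_add]
    · cases s
      · refine ⟨y, ?_⟩
        have hc : List.count tN ((true, false) :: w) = k + 1 := by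
          simp [tN, List.count_cons, hk]
        rw [hc, letterVal_tN, pow_succ']
        group
      · exact absurd rfl hl

lemma wordVal_append (u v : List Letter) :
    wordVal p (u ++ v) = wordVal p u * wordVal p v := by
  simp [wordVal]

end Aux

/-- a word of type `PN` with zero `t`-exponent sum represents an element
of the subgroup `⟨a⟩`, i.e. equals `aᵐ` for some integer `m`. -/
theorem stmt16 (p : ℕ) (hp : 2 ≤ p) (w wP wN : List Letter)
    (hw : w = wP ++ wN) (h1 : TypeP wP) (h2 : TypeN wN) (h0 : texp w = 0) :
    ∃ m : ℤ, wordVal p w = gena p ^ m := by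
  obtain ⟨x, hx⟩ := typeP_val p wP h1.2
  obtain ⟨y, hy⟩ := typeN_val p wN h2.2
  have hcP : List.count tP w = List.count tP wP := by
    rw [hw, List.count_append, List.count_eq_zero_of_not_mem h2.2]; omega
  have hcN : List.count tN w = List.count tN wN := by
    rw [hw, List.count_append, List.count_eq_zero_of_not_mem h1.2]; omega
  have hk : List.count tP wP = List.count tN wN := by
    have h0' := h0
    unfold texp at h0'
    omega
  refine ⟨x + y, ?_⟩
  rw [hw, wordVal_append, hx, hy, hk, zpow_add]
  group
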